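/- Let D be a self-adjoint operator on a finite-dimensional Hilbert space with ‖D‖ ≤ 1, let v be a unit vector, let t ≥ 1, ε' > 0, and let τ ≥ √(2t·ln(2/ε')). Let p_l be the Chebyshev expansion coefficients of x^t. Then ‖ ∑_{l=0}^{τ} p_l T_l(D) v − D^t v ‖ ≤ ε'. -/

import Mathlib

open Polynomial Finset Real

/-- Coefficients of the Chebyshev expansion of `x^t`: `p t l = P(|X_t| = l)` for a
`t`-step simple random walk on `ℤ` started at the origin. -/
noncomputable def chebCoeff (t l : ℕ) : ℝ :=
  if l = 0 then (if t % 2 = 0 then (t.choose (t / 2) : ℝ) / 2 ^ t else 0)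
  else if l ≤ t ∧ l % 2 = t % 2 then (t.choose ((t - l) / 2) : ℝ) / 2 ^ (t - 1) else 0

namespace ChebAux



/-- distribution of a `t`-step simple random walk on `ℤ`. -/
noncomputable def rwd : ℕ → ℤ → ℝ
  | 0, l => if l = 0 then 1 else 0
  | (t+1), l => (rwd t (l-1) + rwd t (l+1)) / 2

lemma rwd_nonneg : ∀ (t : ℕ) (l : ℤ), 0 ≤ rwd t l := by
  intro t
  induction t with
  | zero => intro l; simp only [rwd]; split <;> norm_num
  | succ t ih =>
    intro l
    have h1 := ih (l-1); have h2 := ih (l+1)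
    simp only [rwd]; positivity

lemma rwd_eq_zero : ∀ (t : ℕ) (l : ℤ), ((t:ℤ) < l ∨ l < -(t:ℤ)) → rwd t l = 0 := by
  intro t
  induction t with
  | zero => intro l hl; simp only [rwd]; rw [if_neg]; omega
  | succ t ih =>
    intro l hl
    simp only [rwd, ih (l-1) (by omega), ih (l+1) (by omega)]
    norm_num

lemma rwd_neg : ∀ (t : ℕ) (l : ℤ), rwd t (-l) = rwd t l := by
  intro t
  induction t with
  | zero => intro l; simp only [rwd]; congr 1; simp [neg_eq_zero]
  | succ t ih =>
    intro l
    simp only [rwd]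
    have h1 : -l - 1 = -(l+1) := by ring
    have h2 : -l + 1 = -(l-1) := by ring
    rw [h1, h2, ih, ih, add_comm]

lemma rwd_parity : ∀ (t : ℕ) (l : ℤ), ¬ (2 ∣ (l - t)) → rwd t l = 0 := by
  intro t
  induction t with
  | zero => intro l hl; simp only [rwd]; rw [if_neg]; omega
  | succ t ih =>
    intro l hl
    have h1 : ¬ (2 ∣ (l - 1 - t)) := by push_cast at hl ⊢; omega
    have h2 : ¬ (2 ∣ (l + 1 - t)) := by push_cast at hl ⊢; omega
    simp only [rwd, ih _ h1, ih _ h2]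
    norm_num

lemma rwd_closed : ∀ (t k : ℕ), k ≤ t → ∀ l : ℤ, l = (t : ℤ) - 2 * k →
    rwd t l = (t.choose k : ℝ) / 2 ^ t := by
  intro t
  induction t with
  | zero => intro k hk l hl; interval_cases k; simp only [Nat.cast_zero] at hl; norm_num at hl; simp [rwd, hl]
  | succ t ih =>
    intro k hk l hl
    simp only [rwd]
    rcases Nat.eq_zero_or_pos k with hk0 | hk1
    · subst hk0
      rw [ih 0 (by omega) (l-1) (by omega), rwd_eq_zero t (l+1) (by omega)]
      simp [pow_succ]
      ring
    · rcases Nat.lt_or_ge t k with hk2 | hk2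
      · -- k = t+1
        have hk3 : k = t + 1 := by omega
        subst hk3
        rw [rwd_eq_zero t (l-1) (by omega), ih t (le_refl t) (l+1) (by omega)]
        simp [pow_succ, Nat.choose_self]
        ring
      · -- 1 ≤ k ≤ t
        obtain ⟨j, rfl⟩ : ∃ j, k = j + 1 := ⟨k - 1, by omega⟩
        rw [ih (j+1) (by omega) (l-1) (by omega), ih j (by omega) (l+1) (by omega),
          Nat.choose_succ_succ' t j]
        push_cast
        rw [pow_succ]
        ring






lemma X_mul_T (l : ℤ) : (X : ℝ[X]) * Chebyshev.T ℝ l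
    = (1/2 : ℝ) • (Chebyshev.T ℝ (l+1) + Chebyshev.T ℝ (l-1)) := by
  have h := Polynomial.Chebyshev.T_mul_T ℝ 1 l
  rw [Chebyshev.T_one] at h
  have h2 : Chebyshev.T ℝ (1 - l) = Chebyshev.T ℝ (l - 1) := by
    rw [← Chebyshev.T_neg]; ring_nf
  rw [h2, show (1:ℤ) + l = l + 1 by ring] at h
  have hc : (C (1/2:ℝ)) * 2 = (1:ℝ[X]) := by
    rw [show (2:ℝ[X]) = C 2 from (map_ofNat C 2).symm, ← map_mul]; norm_num
  rw [Polynomial.smul_eq_C_mul]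
  linear_combination (C (1/2:ℝ)) * h - (X * Chebyshev.T ℝ l) * hc

lemma X_pow_eq (t : ℕ) :
    (X : ℝ[X]) ^ t = ∑ l ∈ Finset.Icc (-(t:ℤ)) (t:ℤ), rwd t l • Chebyshev.T ℝ l := by
  induction t with
  | zero => simp [rwd]
  | succ t ih =>
    have expand : (X : ℝ[X]) ^ (t+1)
        = ∑ l ∈ Finset.Icc (-(t:ℤ)) (t:ℤ),
            ((rwd t l / 2) • Chebyshev.T ℝ (l+1) + (rwd t l / 2) • Chebyshev.T ℝ (l-1)) := by
      rw [pow_succ, ih, Finset.sum_mul]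
      refine Finset.sum_congr rfl fun l _ => ?_
      rw [Algebra.smul_mul_assoc, mul_comm, X_mul_T]
      module
    rw [expand, Finset.sum_add_distrib]
    -- first sum: shift l ↦ l+1
    have hA : ∑ l ∈ Finset.Icc (-(t:ℤ)) (t:ℤ), (rwd t l / 2) • Chebyshev.T ℝ (l+1)
        = ∑ m ∈ Finset.Icc (-(t:ℤ)+1) ((t:ℤ)+1), (rwd t (m-1) / 2) • Chebyshev.T ℝ m := by
      apply Finset.sum_nbij' (fun l => l + 1) (fun m => m - 1) <;>
        simp only [Finset.mem_Icc] <;> intros <;> first | omega | (congr 1; omega) | ring_nf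
    have hB : ∑ l ∈ Finset.Icc (-(t:ℤ)) (t:ℤ), (rwd t l / 2) • Chebyshev.T ℝ (l-1)
        = ∑ m ∈ Finset.Icc (-(t:ℤ)-1) ((t:ℤ)-1), (rwd t (m+1) / 2) • Chebyshev.T ℝ m := by
      apply Finset.sum_nbij' (fun l => l - 1) (fun m => m + 1) <;>
        simp only [Finset.mem_Icc] <;> intros <;> first | omega | (congr 1; omega) | ring_nf
    have hA' : ∑ m ∈ Finset.Icc (-(t:ℤ)+1) ((t:ℤ)+1), (rwd t (m-1) / 2) • Chebyshev.T ℝ m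
        = ∑ m ∈ Finset.Icc (-((t:ℤ)+1)) ((t:ℤ)+1), (rwd t (m-1) / 2) • Chebyshev.T ℝ m := by
      apply Finset.sum_subset
      · intro m hm; simp only [Finset.mem_Icc] at *; omega
      · intro m hm hm'
        simp only [Finset.mem_Icc] at hm hm'
        rw [rwd_eq_zero t (m-1) (by omega)]
        simp
    have hB' : ∑ m ∈ Finset.Icc (-(t:ℤ)-1) ((t:ℤ)-1), (rwd t (m+1) / 2) • Chebyshev.T ℝ m
        = ∑ m ∈ Finset.Icc (-((t:ℤ)+1)) ((t:ℤ)+1), (rwd t (m+1) / 2) • Chebyshev.T ℝ m := by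
      apply Finset.sum_subset
      · intro m hm; simp only [Finset.mem_Icc] at *; omega
      · intro m hm hm'
        simp only [Finset.mem_Icc] at hm hm'
        rw [rwd_eq_zero t (m+1) (by omega)]
        simp
    rw [hA, hB, hA', hB', ← Finset.sum_add_distrib]
    have : ((t:ℕ)+1 : ℤ) = (t:ℤ)+1 := by push_cast; ring
    rw [show ((t+1:ℕ) : ℤ) = (t:ℤ)+1 by push_cast; ring]
    refine Finset.sum_congr rfl fun m _ => ?_
    simp only [rwd]
    rw [← add_smul]
    congr 1
    ring










lemma chebCoeff_zero (t : ℕ) : chebCoeff t 0 = rwd t 0 := by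
  unfold chebCoeff
  rcases Nat.even_or_odd t with he | ho
  · have h2 : t % 2 = 0 := Nat.even_iff.mp he
    rw [if_pos rfl, if_pos h2, rwd_closed t (t/2) (by omega) 0 (by omega)]
  · have h2 : t % 2 = 1 := Nat.odd_iff.mp ho
    rw [if_pos rfl, if_neg (by omega), rwd_parity t 0 (by omega)]

lemma chebCoeff_pos (t l : ℕ) (hl : 1 ≤ l) : chebCoeff t l = 2 * rwd t (l:ℤ) := by
  unfold chebCoeff
  rw [if_neg (by omega)]
  by_cases hc : l ≤ t ∧ l % 2 = t % 2
  · rw [if_pos hc]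
    obtain ⟨h1, h2⟩ := hc
    rw [rwd_closed t ((t-l)/2) (by omega) (l:ℤ) (by omega)]
    have ht1 : 1 ≤ t := le_trans hl h1
    have hp : (2:ℝ)^t = 2 * 2^(t-1) := by
      rw [← pow_succ']; congr 1; omega
    rw [hp]; ring
  · rw [if_neg hc]
    rcases Nat.lt_or_ge t l with h | h
    · rw [rwd_eq_zero t l (by omega)]; ring
    · rw [rwd_parity t l (by omega)]; ring

lemma chebCoeff_nonneg (t l : ℕ) : 0 ≤ chebCoeff t l := by
  unfold chebCoeff
  split <;> split <;> first | positivity | rfl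

lemma chebCoeff_eq_zero_of_gt (t l : ℕ) (h : t < l) : chebCoeff t l = 0 := by
  unfold chebCoeff
  rw [if_neg (by omega), if_neg (by omega)]

lemma X_pow_eq' (t : ℕ) :
    (X : ℝ[X]) ^ t = ∑ l ∈ Finset.range (t+1), chebCoeff t l • Chebyshev.T ℝ (l:ℤ) := by
  rw [X_pow_eq]
  have hsplit : Finset.Icc (-(t:ℤ)) (t:ℤ) = Finset.Ioc (-(t:ℤ)-1) (t:ℤ) := by
    ext x; simp only [Finset.mem_Icc, Finset.mem_Ioc]; omega
  rw [hsplit, ← Finset.Ioc_union_Ioc_eq_Ioc (show -(t:ℤ)-1 ≤ -1 by omega)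
    (show (-1:ℤ) ≤ (t:ℤ) by omega),
    Finset.sum_union (Finset.disjoint_left.mpr (fun {a} ha hb => by simp only [Finset.mem_Ioc] at ha hb; omega))]
  -- negative part equals sum over Ioc 0 t
  have hneg : ∑ l ∈ Finset.Ioc (-(t:ℤ)-1) (-1), rwd t l • Chebyshev.T ℝ l
      = ∑ l ∈ Finset.Ioc (0:ℤ) (t:ℤ), rwd t l • Chebyshev.T ℝ l := by
    apply Finset.sum_nbij' (fun l => -l) (fun l => -l) <;>
      simp only [Finset.mem_Ioc] <;> intro a ha <;>
        first | omega | (rw [rwd_neg, Chebyshev.T_neg])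
  rw [hneg]
  -- RHS: reindex over ℤ
  have hR : ∑ l ∈ Finset.range (t+1), chebCoeff t l • Chebyshev.T ℝ (l:ℤ)
      = ∑ l ∈ Finset.Ioc (-1:ℤ) (t:ℤ), chebCoeff t l.toNat • Chebyshev.T ℝ l := by
    apply Finset.sum_nbij' (fun l : ℕ => (l:ℤ)) (fun l : ℤ => l.toNat) <;>
      simp only [Finset.mem_Ioc, Finset.mem_range] <;> intro a ha <;>
        first | omega | simp | (congr 1 <;> omega)
  have h0 : Finset.Ioc (-1:ℤ) 0 = {0} := by ext x; simp only [Finset.mem_Ioc, Finset.mem_singleton]; omega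
  rw [hR, ← Finset.Ioc_union_Ioc_eq_Ioc (show (-1:ℤ) ≤ 0 by omega)
    (show (0:ℤ) ≤ (t:ℤ) by omega),
    Finset.sum_union (Finset.disjoint_left.mpr (fun {a} ha hb => by simp only [Finset.mem_Ioc] at ha hb; omega))]
  have hterm : ∀ l ∈ Finset.Ioc (0:ℤ) (t:ℤ), chebCoeff t l.toNat • Chebyshev.T ℝ l
      = rwd t l • Chebyshev.T ℝ l + rwd t l • Chebyshev.T ℝ l := by
    intro l hl
    simp only [Finset.mem_Ioc] at hl
    rw [chebCoeff_pos t l.toNat (by omega), show ((l.toNat:ℕ):ℤ) = l by omega, two_mul, add_smul]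
  rw [h0, Finset.sum_union (Finset.disjoint_singleton_left.mpr (by simp)),
    Finset.sum_singleton, Finset.sum_singleton, Int.toNat_zero, chebCoeff_zero,
    Finset.sum_congr rfl hterm, Finset.sum_add_distrib]
  abel



variable {E : Type*} [NormedAddCommGroup E] [InnerProductSpace ℝ E] [FiniteDimensional ℝ E]

lemma pow_apply_eigen (D : E →L[ℝ] E) {μ : ℝ} {w : E} (hw : D w = μ • w) (k : ℕ) :
    (D ^ k) w = (μ ^ k) • w := by
  induction k with
  | zero => simp
  | succ k ih =>
    rw [pow_succ, pow_succ, ContinuousLinearMap.mul_apply, hw, map_smul, ih, smul_smul, mul_comm]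

lemma aeval_apply_eigen (D : E →L[ℝ] E) {μ : ℝ} {w : E} (hw : D w = μ • w) (p : ℝ[X]) :
    (aeval D p) w = (p.eval μ) • w := by
  rw [Polynomial.aeval_eq_sum_range, Polynomial.eval_eq_sum_range]
  rw [ContinuousLinearMap.sum_apply]
  rw [Finset.sum_smul]
  refine Finset.sum_congr rfl fun k _ => ?_
  rw [ContinuousLinearMap.smul_apply, pow_apply_eigen D hw, smul_smul]

lemma norm_aeval_apply_le (D : E →L[ℝ] E) (hD : IsSelfAdjoint D) (hDnorm : ‖D‖ ≤ 1)
    (p : ℝ[X]) (hp : ∀ x : ℝ, |x| ≤ 1 → |p.eval x| ≤ 1) (v : E) :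
    ‖(aeval D p) v‖ ≤ ‖v‖ := by
  have hT : (↑D : E →ₗ[ℝ] E).IsSymmetric := hD.isSymmetric
  set n := Module.finrank ℝ E with hn
  set b := hT.eigenvectorBasis rfl with hb
  set μ := hT.eigenvalues rfl with hμ
  have heig : ∀ i, D (b i) = μ i • b i := fun i => hT.apply_eigenvectorBasis rfl i
  have hnorm1 : ∀ i, ‖b i‖ = 1 := fun i => b.orthonormal.1 i
  have hμle : ∀ i, |μ i| ≤ 1 := by
    intro i
    have h1 : ‖D (b i)‖ ≤ 1 := by
      calc ‖D (b i)‖ ≤ ‖D‖ * ‖b i‖ := D.le_opNorm _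
        _ ≤ 1 := by rw [hnorm1]; simpa using hDnorm
    rw [heig i, norm_smul, hnorm1 i, mul_one, Real.norm_eq_abs] at h1
    exact h1
  have hvrepr : v = ∑ i, b.repr v i • b i := (b.sum_repr v).symm
  have happ : (aeval D p) v = ∑ i, (p.eval (μ i) * b.repr v i) • b i := by
    conv_lhs => rw [hvrepr]
    rw [map_sum]
    refine Finset.sum_congr rfl fun i _ => ?_
    rw [map_smul, aeval_apply_eigen D (heig i), smul_smul, mul_comm]
  -- squared norms
  have hsq1 : ‖(aeval D p) v‖ ^ 2 = ∑ i, (p.eval (μ i) * b.repr v i) ^ 2 := by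
    rw [happ, ← real_inner_self_eq_norm_sq,
      b.orthonormal.inner_sum (fun i => p.eval (μ i) * b.repr v i) _ Finset.univ]
    simp [sq]
  have hsq2 : ‖v‖ ^ 2 = ∑ i, (b.repr v i) ^ 2 := by
    conv_lhs => rw [hvrepr]
    rw [← real_inner_self_eq_norm_sq,
      b.orthonormal.inner_sum (fun i => b.repr v i) _ Finset.univ]
    simp [sq]
  have hle : ‖(aeval D p) v‖ ^ 2 ≤ ‖v‖ ^ 2 := by
    rw [hsq1, hsq2]
    refine Finset.sum_le_sum fun i _ => ?_
    have h2 : |p.eval (μ i)| ≤ 1 := hp _ (hμle i)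
    rw [mul_pow]
    have h3 : p.eval (μ i) ^ 2 ≤ 1 := by
      rw [← sq_abs]; nlinarith [abs_nonneg (p.eval (μ i))]
    nlinarith [sq_nonneg (b.repr v i)]
  nlinarith [norm_nonneg ((aeval D p) v), norm_nonneg v]



lemma abs_T_eval_le (l : ℤ) (x : ℝ) (hx : |x| ≤ 1) : |(Chebyshev.T ℝ l).eval x| ≤ 1 := by
  obtain ⟨h1, h2⟩ := abs_le.mp hx
  have : Real.cos (Real.arccos x) = x := Real.cos_arccos h1 h2
  rw [← this, Polynomial.Chebyshev.T_real_cos]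
  exact Real.abs_cos_le_one _


lemma tail_bound (t : ℕ) (ht : 1 ≤ t) (τ M : ℕ) :
    ∑ l ∈ Finset.Ico (τ + 1) M, chebCoeff t l
      ≤ 2 * Real.exp (-(τ:ℝ)^2 / (2*t)) := by
  classical
  have ht0 : (0:ℝ) < t := by exact_mod_cast ht
  set s : ℝ := (τ : ℝ) / t with hs
  have hs0 : 0 ≤ s := by positivity
  set g : ℕ → ℝ := fun k => (t.choose k : ℝ) / 2^(t-1) * Real.exp (s * ((t:ℝ) - 2*k)) with hg
  -- Step 1+2
  have step1 : ∑ l ∈ Finset.Ico (τ + 1) M, chebCoeff t l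
      ≤ Real.exp (-(s * τ)) * ∑ l ∈ Finset.Ico (τ + 1) M, chebCoeff t l * Real.exp (s * l) := by
    rw [Finset.mul_sum]
    refine Finset.sum_le_sum fun l hl => ?_
    simp only [Finset.mem_Ico] at hl
    have h2 : (1:ℝ) ≤ Real.exp (-(s*τ)) * Real.exp (s*l) := by
      rw [← Real.exp_add]
      apply Real.one_le_exp
      have : (τ:ℝ) ≤ (l:ℝ) := by exact_mod_cast Nat.le_of_succ_le hl.1
      nlinarith
    calc chebCoeff t l = chebCoeff t l * 1 := by ring
      _ ≤ chebCoeff t l * (Real.exp (-(s*τ)) * Real.exp (s*l)) :=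
          mul_le_mul_of_nonneg_left h2 (chebCoeff_nonneg t l)
      _ = Real.exp (-(s*τ)) * (chebCoeff t l * Real.exp (s*l)) := by ring
  -- Step 3: compare with binomial sum
  have step3 : ∑ l ∈ Finset.Ico (τ + 1) M, chebCoeff t l * Real.exp (s * l)
      ≤ ∑ k ∈ Finset.range (t+1), g k := by
    set S : Finset ℕ := (Finset.Ico (τ + 1) M).filter (fun l => l ≤ t ∧ l % 2 = t % 2) with hS
    have hfilter : ∑ l ∈ S, chebCoeff t l * Real.exp (s * l)
        = ∑ l ∈ Finset.Ico (τ + 1) M, chebCoeff t l * Real.exp (s * l) := by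
      apply Finset.sum_filter_of_ne
      intro l hl hne
      simp only [Finset.mem_Ico] at hl
      by_contra hcond
      apply hne
      unfold chebCoeff
      rw [if_neg (by omega), if_neg hcond]
      ring
    rw [← hfilter]
    have hterm : ∀ l ∈ S, chebCoeff t l * Real.exp (s * l) = g ((t - l)/2) := by
      intro l hl
      simp only [hS, Finset.mem_filter, Finset.mem_Ico] at hl
      obtain ⟨⟨hl1, _⟩, hl2, hl3⟩ := hl
      have hld : 2 * ((t - l)/2) = t - l := by omega
      have hcast : ((t:ℝ) - 2*(((t - l)/2 : ℕ):ℝ)) = (l:ℝ) := by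
        have h' : ((2 * ((t-l)/2) : ℕ) : ℝ) = ((t - l : ℕ) : ℝ) := by rw [hld]
        rw [Nat.cast_sub hl2] at h'
        push_cast at h' ⊢
        linarith
      unfold chebCoeff
      rw [if_neg (by omega), if_pos ⟨hl2, hl3⟩, hg]
      simp only
      rw [hcast]
    rw [Finset.sum_congr rfl hterm]
    have hinj : Set.InjOn (fun l => (t - l)/2) S := by
      intro a ha b hb hab
      simp only [hS, Finset.coe_filter, Finset.mem_Ico, Set.mem_setOf_eq] at ha hb
      simp only at hab
      omega
    rw [← Finset.sum_image (fun a ha b hb hab => hinj ha hb hab)]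
    apply Finset.sum_le_sum_of_subset_of_nonneg
    · intro k hk
      simp only [Finset.mem_image, hS, Finset.mem_filter, Finset.mem_Ico] at hk
      simp only [Finset.mem_range]
      omega
    · intro k _ _
      rw [hg]
      positivity
  -- Step 4: binomial theorem
  have step4 : ∑ k ∈ Finset.range (t+1), g k = 2 * (Real.cosh s)^t := by
    have hbin := add_pow (Real.exp (-s)) (Real.exp s) t
    have hterm : ∀ k ∈ Finset.range (t+1),
        Real.exp (-s)^k * Real.exp s^(t-k) * (t.choose k : ℝ)
          = (t.choose k : ℝ) * Real.exp (s * ((t:ℝ) - 2*k)) := by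
      intro k hk
      simp only [Finset.mem_range] at hk
      rw [← Real.exp_nat_mul, ← Real.exp_nat_mul, ← Real.exp_add]
      have : (k:ℝ) * (-s) + ((t-k : ℕ):ℝ) * s = s * ((t:ℝ) - 2*k) := by
        rw [Nat.cast_sub (by omega)]
        ring
      rw [this]
      ring
    rw [Finset.sum_congr rfl hterm] at hbin
    have hcosh : Real.exp (-s) + Real.exp s = 2 * Real.cosh s := by
      rw [Real.cosh_eq]; ring
    rw [hcosh] at hbin
    have : ∑ k ∈ Finset.range (t+1), g k
        = (∑ k ∈ Finset.range (t+1), (t.choose k : ℝ) * Real.exp (s * ((t:ℝ) - 2*k))) / 2^(t-1) := by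
      rw [Finset.sum_div]
      refine Finset.sum_congr rfl fun k _ => ?_
      rw [hg]; ring
    rw [this, ← hbin, mul_pow]
    have h2t : (2:ℝ)^t = 2 * 2^(t-1) := by
      rw [← pow_succ']; congr 1; omega
    rw [h2t]
    have h2ne : (2:ℝ)^(t-1) ≠ 0 := by positivity
    field_simp
  -- Step 5: cosh bound and conclusion
  have step5 : (Real.cosh s)^t ≤ Real.exp ((t:ℝ) * s^2 / 2) := by
    calc (Real.cosh s)^t ≤ (Real.exp (s^2/2))^t :=
          pow_le_pow_left₀ (Real.cosh_pos s).le (Real.cosh_le_exp_half_sq s) t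
      _ = Real.exp ((t:ℝ) * (s^2/2)) := by rw [← Real.exp_nat_mul]
      _ = Real.exp ((t:ℝ) * s^2 / 2) := by ring_nf
  have hexp : -(s * τ) + (t:ℝ) * s^2 / 2 = -(τ:ℝ)^2 / (2*t) := by
    rw [hs]; field_simp; ring
  calc ∑ l ∈ Finset.Ico (τ + 1) M, chebCoeff t l
      ≤ Real.exp (-(s * τ)) * ∑ l ∈ Finset.Ico (τ + 1) M, chebCoeff t l * Real.exp (s * l) := step1
    _ ≤ Real.exp (-(s * τ)) * ∑ k ∈ Finset.range (t+1), g k := by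
        apply mul_le_mul_of_nonneg_left step3 (Real.exp_nonneg _)
    _ = Real.exp (-(s * τ)) * (2 * (Real.cosh s)^t) := by rw [step4]
    _ ≤ Real.exp (-(s * τ)) * (2 * Real.exp ((t:ℝ) * s^2 / 2)) := by
        apply mul_le_mul_of_nonneg_left _ (Real.exp_nonneg _)
        linarith
    _ = 2 * Real.exp (-(s * τ) + (t:ℝ) * s^2 / 2) := by rw [Real.exp_add]; ring
    _ = 2 * Real.exp (-(τ:ℝ)^2 / (2*t)) := by rw [hexp]

lemma exp_bound (t : ℕ) (ht : 1 ≤ t) (ε' : ℝ) (hε' : 0 < ε') (τ : ℕ)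
    (hτ : Real.sqrt (2 * t * Real.log (2 / ε')) ≤ τ) :
    2 * Real.exp (-(τ:ℝ)^2 / (2*t)) ≤ ε' := by
  have ht0 : (0:ℝ) < t := by exact_mod_cast ht
  rcases le_or_gt 2 ε' with h2 | h2
  · have : Real.exp (-(τ:ℝ)^2 / (2*t)) ≤ 1 := by
      apply Real.exp_le_one_iff.mpr
      have : (0:ℝ) ≤ (τ:ℝ)^2 := sq_nonneg _
      apply div_nonpos_of_nonpos_of_nonneg <;> nlinarith
    linarith
  · have hlog : 0 ≤ Real.log (2 / ε') := Real.log_nonneg (by rw [le_div_iff₀ hε']; linarith)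
    have harg : 0 ≤ 2 * (t:ℝ) * Real.log (2 / ε') := by positivity
    have hsq : 2 * (t:ℝ) * Real.log (2 / ε') ≤ (τ:ℝ)^2 := by
      have h1 : Real.sqrt (2 * t * Real.log (2 / ε')) ^ 2 ≤ (τ:ℝ)^2 :=
        pow_le_pow_left₀ (Real.sqrt_nonneg _) hτ 2
      rwa [Real.sq_sqrt harg] at h1
    have hle : -(τ:ℝ)^2 / (2*t) ≤ -Real.log (2 / ε') := by
      rw [neg_div, neg_le_neg_iff, le_div_iff₀ (by positivity)]
      linarith
    have : Real.exp (-(τ:ℝ)^2 / (2*t)) ≤ Real.exp (-Real.log (2/ε')) := Real.exp_le_exp.mpr hle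
    rw [← Real.log_inv, Real.exp_log (by positivity)] at this
    have hinv : (2 / ε')⁻¹ = ε' / 2 := by field_simp
    rw [hinv] at this
    linarith

end ChebAux

open ChebAux in
/-- Truncated Chebyshev approximation of `D^t v` for a self-adjoint contraction `D`
on a finite-dimensional Hilbert space: with `τ ≥ √(2t ln(2/ε'))` terms, the error is
at most `ε'`. -/
theorem truncated_chebyshev_operator_approx
    {E : Type*} [NormedAddCommGroup E] [InnerProductSpace ℝ E] [FiniteDimensional ℝ E]
    (D : E →L[ℝ] E) (hD : IsSelfAdjoint D) (hDnorm : ‖D‖ ≤ 1)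
    (v : E) (hv : ‖v‖ = 1) (t : ℕ) (ht : 1 ≤ t) (ε' : ℝ) (hε' : 0 < ε')
    (τ : ℕ) (hτ : Real.sqrt (2 * t * Real.log (2 / ε')) ≤ τ) :
    ‖(∑ l ∈ Finset.range (τ + 1),
        chebCoeff t l • (Polynomial.aeval D (Polynomial.Chebyshev.T ℝ (l : ℤ))) v)
      - (D ^ t) v‖ ≤ ε' := by
  set x : ℕ → E := fun l => chebCoeff t l • (Polynomial.aeval D (Polynomial.Chebyshev.T ℝ (l : ℤ))) v with hx
  have hDt : (D ^ t) v = ∑ l ∈ Finset.range (t + 1), x l := by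
    have h1 : (D ^ t) v = (aeval D ((X : ℝ[X]) ^ t)) v := by rw [map_pow, aeval_X]
    rw [h1, X_pow_eq' t, map_sum, ContinuousLinearMap.sum_apply]
    refine Finset.sum_congr rfl fun l _ => ?_
    rw [map_smul, ContinuousLinearMap.smul_apply]
  set N := max (τ + 1) (t + 1) with hN
  have hsplit1 : ∑ l ∈ Finset.range (τ + 1), x l
      = ∑ l ∈ Finset.range N, x l - ∑ l ∈ Finset.Ico (τ + 1) N, x l := by
    rw [eq_sub_iff_add_eq, Finset.range_eq_Ico, Finset.range_eq_Ico]
    exact Finset.sum_Ico_consecutive _ (by omega) (by omega)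
  have hsplit2 : ∑ l ∈ Finset.range (t + 1), x l
      = ∑ l ∈ Finset.range N, x l - ∑ l ∈ Finset.Ico (t + 1) N, x l := by
    rw [eq_sub_iff_add_eq, Finset.range_eq_Ico, Finset.range_eq_Ico]
    exact Finset.sum_Ico_consecutive _ (by omega) (by omega)
  have hdiff : (∑ l ∈ Finset.range (τ + 1), x l) - (D ^ t) v
      = (∑ l ∈ Finset.Ico (t + 1) N, x l) - ∑ l ∈ Finset.Ico (τ + 1) N, x l := by
    rw [hDt, hsplit1, hsplit2]
    abel
  rw [hdiff]
  have hzero : ∑ l ∈ Finset.Ico (t + 1) N, x l = 0 := by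
    apply Finset.sum_eq_zero
    intro l hl
    simp only [Finset.mem_Ico] at hl
    rw [hx]
    simp only
    rw [chebCoeff_eq_zero_of_gt t l (by omega), zero_smul]
  rw [hzero, zero_sub, norm_neg]
  have hterm : ∀ l ∈ Finset.Ico (τ + 1) N, ‖x l‖ ≤ chebCoeff t l := by
    intro l _
    rw [hx]
    simp only
    rw [norm_smul, Real.norm_eq_abs, abs_of_nonneg (chebCoeff_nonneg t l)]
    have hb := norm_aeval_apply_le D hD hDnorm (Chebyshev.T ℝ (l : ℤ))
      (fun y hy => abs_T_eval_le (l : ℤ) y hy) v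
    rw [hv] at hb
    nlinarith [chebCoeff_nonneg t l]
  calc ‖∑ l ∈ Finset.Ico (τ + 1) N, x l‖
      ≤ ∑ l ∈ Finset.Ico (τ + 1) N, ‖x l‖ := norm_sum_le _ _
    _ ≤ ∑ l ∈ Finset.Ico (τ + 1) N, chebCoeff t l := Finset.sum_le_sum hterm
    _ ≤ 2 * Real.exp (-(τ:ℝ)^2 / (2*t)) := tail_bound t ht τ N
    _ ≤ ε' := exp_bound t ht ε' hε' τ hτ
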